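/- If the bipartite graph G(Y,X;A) associated to the support of a matrix A ∈ R^{p×q} has a perfect n-gram matching, then the bipartite graph G(Y,X^{(n)};A^{⊙n}) associated to the n-th Khatri-Rao power of A has a perfect (Y-saturating) matching, where X^{(n)} = [p]^n indexes the rows of A^{⊙n}. -/
import Mathlib


/-- Neighbors of a column `j` via the edge set `M` in the support bipartite graph of a matrix. -/
def matchedNeighbors {p q : ℕ} (M : Finset (Fin q × Fin p)) (j : Fin q) : Finset (Fin p) :=
  Finset.univ.filter fun i => (j, i) ∈ M

/-- `M` is a perfect `n`-gram matching for the bipartite graph `G(Y,X;A)` where `Y = [q]`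
indexes columns, `X = [p]` indexes rows, and `(j,i)` is an edge iff `A i j ≠ 0`. -/
def IsPerfectNGramMatchingOf {p q : ℕ} (A : Matrix (Fin p) (Fin q) ℝ)
    (M : Finset (Fin q × Fin p)) (n : ℕ) : Prop :=
  (∀ e ∈ M, A e.2 e.1 ≠ 0) ∧ (∀ j : Fin q, (matchedNeighbors M j).card = n) ∧
    ∀ j₁ j₂ : Fin q, j₁ ≠ j₂ →
      (matchedNeighbors M j₁ ∩ matchedNeighbors M j₂).card <
        min (matchedNeighbors M j₁).card (matchedNeighbors M j₂).card

/-- If the support bipartite graph `G(Y,X;A)` of `A ∈ ℝ^{p×q}` has a perfect `n`-gram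
matching, then the bipartite graph `G(Y,X^{(n)};A^{⊙n})` of the `n`-th Khatri-Rao power
(whose entry at row `(i₁,…,iₙ)` and column `j` is `∏ₖ A_{iₖ j}`) has a perfect
(`Y`-saturating) matching: an injective assignment of a row `n`-tuple with nonzero entry
to each column. -/
theorem khatriRao_perfect_matching_of_perfect_ngram_matching
    {p q n : ℕ} (A : Matrix (Fin p) (Fin q) ℝ)
    (h : ∃ M : Finset (Fin q × Fin p), IsPerfectNGramMatchingOf A M n) :
    ∃ f : Fin q → (Fin n → Fin p), Function.Injective f ∧
      ∀ j : Fin q, (∏ k : Fin n, A (f j k) j) ≠ 0 := by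
  obtain ⟨M, hM1, hM2, hM3⟩ := h
  refine ⟨fun j k => (matchedNeighbors M j).orderIsoOfFin (hM2 j) k, ?_, ?_⟩
  · intro j₁ j₂ hf
    by_contra hne
    have hiso : ∀ j i, i ∈ matchedNeighbors M j ↔
        ∃ k : Fin n, ((matchedNeighbors M j).orderIsoOfFin (hM2 j) k : Fin p) = i := by
      intro j i
      constructor
      · intro hi
        exact ⟨((matchedNeighbors M j).orderIsoOfFin (hM2 j)).symm ⟨i, hi⟩, by simp⟩
      · rintro ⟨k, rfl⟩
        exact ((matchedNeighbors M j).orderIsoOfFin (hM2 j) k).2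
    have heq : matchedNeighbors M j₁ = matchedNeighbors M j₂ := by
      ext i
      rw [hiso, hiso]
      constructor
      · rintro ⟨k, rfl⟩
        exact ⟨k, (congrFun hf k).symm⟩
      · rintro ⟨k, rfl⟩
        exact ⟨k, congrFun hf k⟩
    have := hM3 j₁ j₂ hne
    rw [heq, Finset.inter_self, hM2 j₂, min_self] at this
    exact lt_irrefl _ this
  · intro j
    refine Finset.prod_ne_zero_iff.mpr fun k _ => ?_
    have hi : ((matchedNeighbors M j).orderIsoOfFin (hM2 j) k : Fin p)
        ∈ matchedNeighbors M j := ((matchedNeighbors M j).orderIsoOfFin (hM2 j) k).2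
    have : (j, ((matchedNeighbors M j).orderIsoOfFin (hM2 j) k : Fin p)) ∈ M := by
      exact (Finset.mem_filter.mp hi).2
    exact hM1 _ this
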